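/- A process U(t,τ) is totally dissipative if and only if there exists a pullback absorbing family {B_t} such that for every t ∈ ℝ, the Kuratowski measure of noncompactness α_t(U(t,τ)B_τ) tends to 0 as τ → −∞. -/

import Mathlib

open Filter Metric Set Topology

/-- A family of sets is uniformly bounded. -/
def UnifBdd {X : ℝ → Type*} [∀ t, NormedAddCommGroup (X t)] (C : ∀ t, Set (X t)) : Prop :=
  ∃ R > 0, ∀ t, C t ⊆ closedBall (0 : X t) R

/-- Pullback absorbing family for a process `U`. -/
def PullbackAbsorbing {X : ℝ → Type*} [∀ t, NormedAddCommGroup (X t)]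
    (U : ∀ t τ : ℝ, X τ → X t) (B : ∀ t, Set (X t)) : Prop :=
  UnifBdd B ∧ ∀ t : ℝ, ∀ R > 0, ∃ t0 ≤ t, ∀ τ ≤ t0, U t τ '' closedBall 0 R ⊆ B t

/-- Pullback attracting family: every ε-neighborhood family is pullback absorbing. -/
def PullbackAttracting {X : ℝ → Type*} [∀ t, NormedAddCommGroup (X t)]
    (U : ∀ t τ : ℝ, X τ → X t) (K : ∀ t, Set (X t)) : Prop :=
  UnifBdd K ∧ ∀ ε > 0, PullbackAbsorbing U (fun t => thickening ε (K t))

/-- Set of subsequential limits of a sequence. -/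
def LimSet {Y : Type*} [NormedAddCommGroup Y] (y : ℕ → Y) : Set Y :=
  {x | ∃ φ : ℕ → ℕ, StrictMono φ ∧ Tendsto (y ∘ φ) atTop (𝓝 x)}

/-- `A*_t`: union of subsequential limit sets of sequences `U t τₙ xₙ` with
`τₙ → -∞` and `xₙ` uniformly bounded. -/
def AStar {X : ℝ → Type*} [∀ t, NormedAddCommGroup (X t)]
    (U : ∀ t τ : ℝ, X τ → X t) (t : ℝ) : Set (X t) :=
  {x | ∃ (τ : ℕ → ℝ) (xs : ∀ n, X (τ n)),
      Tendsto τ atTop atBot ∧ (∃ R, ∀ n, ‖xs n‖ ≤ R) ∧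
      x ∈ LimSet (fun n => U t (τ n) (xs n))}

/-- Kuratowski measure of noncompactness. -/
noncomputable def kuratowski {Y : Type*} [PseudoMetricSpace Y] (s : Set Y) : ℝ :=
  sInf {d : ℝ | 0 < d ∧ ∃ 𝒞 : Finset (Set Y), (s ⊆ ⋃ c ∈ 𝒞, c) ∧
    ∀ c ∈ 𝒞, EMetric.diam c < ENNReal.ofReal d}

lemma kuratowski_nonneg {Y : Type*} [PseudoMetricSpace Y] (s : Set Y) :
    0 ≤ kuratowski s :=
  Real.sInf_nonneg (fun _ hd => hd.1.le)

lemma kuratowski_le {Y : Type*} [PseudoMetricSpace Y] {s : Set Y} {d : ℝ} (hd : 0 < d)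
    (h : ∃ 𝒞 : Finset (Set Y), (s ⊆ ⋃ c ∈ 𝒞, c) ∧
      ∀ c ∈ 𝒞, EMetric.diam c < ENNReal.ofReal d) : kuratowski s ≤ d :=
  csInf_le ⟨0, fun _ hx => hx.1.le⟩ ⟨hd, h⟩

theorem stmt5 {X : ℝ → Type*} [∀ t, NormedAddCommGroup (X t)]
    (U : ∀ t τ : ℝ, X τ → X t)
    (hU1 : ∀ (t : ℝ) (x : X t), U t t x = x)
    (hU2 : ∀ {t τ σ : ℝ}, σ ≤ τ → τ ≤ t → ∀ x : X σ, U t τ (U τ σ x) = U t σ x) :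
    (∀ ε > (0:ℝ), ∃ F : ∀ t, Set (X t), (∀ t, (F t).Finite) ∧
        PullbackAbsorbing U (fun t => thickening ε (F t))) ↔
    ∃ B : ∀ t, Set (X t), PullbackAbsorbing U B ∧
      ∀ t : ℝ, Tendsto (fun τ => kuratowski (U t τ '' B τ)) atBot (𝓝 0) := by
  classical
  constructor
  · intro h
    obtain ⟨F1, _, hF1abs⟩ := h 1 one_pos
    refine ⟨fun t => thickening 1 (F1 t), hF1abs, fun t => ?_⟩
    obtain ⟨R0, hR0, hBbd⟩ := hF1abs.1
    rw [Metric.tendsto_nhds]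
    intro ε hε
    obtain ⟨F, hFfin, hFabs⟩ := h (ε/4) (by linarith)
    obtain ⟨t0, _, ht0⟩ := hFabs.2 t R0 hR0
    rw [eventually_atBot]
    refine ⟨t0, fun τ hτ => ?_⟩
    have hsub : U t τ '' thickening 1 (F1 τ) ⊆ thickening (ε/4) (F t) :=
      (Set.image_mono (hBbd τ)).trans (ht0 τ hτ)
    have hkle : kuratowski (U t τ '' thickening 1 (F1 τ)) ≤ 3*ε/4 := by
      refine kuratowski_le (by linarith) ?_
      refine ⟨(hFfin t).toFinset.image (fun x => Metric.ball x (ε/4)), ?_, ?_⟩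
      · refine hsub.trans ?_
        rw [thickening_eq_biUnion_ball]
        intro y hy
        simp only [Set.mem_iUnion] at hy ⊢
        obtain ⟨x, hx, hyx⟩ := hy
        exact ⟨Metric.ball x (ε/4), by
          simp only [Finset.mem_coe, Finset.mem_image, Set.Finite.mem_toFinset]
          exact ⟨x, hx, rfl⟩, hyx⟩
      · intro c hc
        simp only [Finset.mem_image, Set.Finite.mem_toFinset] at hc
        obtain ⟨x, _, rfl⟩ := hc
        calc EMetric.diam (Metric.ball x (ε/4))
            ≤ 2 * ENNReal.ofReal (ε/4) := by
              rw [← Metric.emetric_ball]; exact EMetric.diam_ball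
          _ = ENNReal.ofReal (ε/2) := by
              rw [← ENNReal.ofReal_ofNat, ← ENNReal.ofReal_mul (by norm_num)]
              congr 1; ring
          _ < ENNReal.ofReal (3*ε/4) := by
              rw [ENNReal.ofReal_lt_ofReal_iff (by linarith)]; linarith
    rw [Real.dist_eq, sub_zero, abs_of_nonneg (kuratowski_nonneg _)]
    linarith
  · rintro ⟨B, ⟨⟨R0, hR0, hBR0⟩, habs⟩, hα⟩
    intro ε hε
    have claim : ∀ t : ℝ, ∃ Ft : Set (X t), Ft.Finite ∧ Ft ⊆ closedBall 0 R0 ∧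
        ∃ τ' ≤ t, U t τ' '' B τ' ⊆ thickening ε Ft := by
      intro t
      obtain ⟨t0, ht0t, ht0⟩ := habs t R0 hR0
      have hev := (hα t).eventually ((tendsto_id.eventually_lt_const hε))
      rw [eventually_atBot] at hev
      obtain ⟨t1, ht1⟩ := hev
      set τ' := min t0 t1 with hτ'
      have hτ't0 : τ' ≤ t0 := min_le_left _ _
      have hst : U t τ' '' B τ' ⊆ B t :=
        (Set.image_mono (hBR0 τ')).trans (ht0 τ' hτ't0)
      have hsbd : U t τ' '' B τ' ⊆ closedBall 0 R0 := hst.trans (hBR0 t)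
      -- the defining set of the Kuratowski measure is nonempty
      have hne : {d : ℝ | 0 < d ∧ ∃ 𝒞 : Finset (Set (X t)),
          (U t τ' '' B τ' ⊆ ⋃ c ∈ 𝒞, c) ∧
          ∀ c ∈ 𝒞, EMetric.diam c < ENNReal.ofReal d}.Nonempty := by
        have hbd : EMetric.diam (closedBall (0 : X t) R0) ≠ ⊤ :=
          (Metric.isBounded_closedBall).ediam_ne_top
        refine ⟨(EMetric.diam (closedBall (0 : X t) R0)).toReal + 1,
          by positivity, {closedBall (0 : X t) R0}, ?_, ?_⟩
        · refine hsbd.trans ?_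
          intro y hy
          simp only [Set.mem_iUnion]
          exact ⟨closedBall 0 R0, Finset.mem_singleton_self _, hy⟩
        · intro c hc
          rw [Finset.mem_singleton] at hc
          subst hc
          conv_lhs => rw [← ENNReal.ofReal_toReal hbd]
          rw [ENNReal.ofReal_lt_ofReal_iff (by positivity)]
          linarith
      have hklt : kuratowski (U t τ' '' B τ') < ε := ht1 τ' (min_le_right _ _)
      rw [kuratowski, csInf_lt_iff ⟨0, fun _ hx => hx.1.le⟩ hne] at hklt
      obtain ⟨d, ⟨hd0, 𝒞, hcov, hdiam⟩, hdε⟩ := hklt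
      classical
      set s := U t τ' '' B τ' with hs
      set f : Set (X t) → X t := fun c =>
        if h : (c ∩ s).Nonempty then h.choose else 0 with hf
      refine ⟨f '' ↑𝒞, 𝒞.finite_toSet.image f, ?_, τ', le_trans hτ't0 ht0t, ?_⟩
      · intro x hx
        obtain ⟨c, hc, rfl⟩ := hx
        by_cases h : (c ∩ s).Nonempty
        · have := h.choose_spec
          have hmem : f c ∈ s := by rw [hf]; simp only [dif_pos h]; exact this.2
          exact hsbd hmem
        · rw [hf]; simp only [dif_neg h]
          exact Metric.mem_closedBall_self hR0.le
      · intro y hy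
        obtain ⟨c, hc, hyc⟩ := by
          have := hcov hy
          simp only [Set.mem_iUnion] at this
          exact this
        have h : (c ∩ s).Nonempty := ⟨y, hyc, hy⟩
        have hfc : f c ∈ c ∩ s := by rw [hf]; simp only [dif_pos h]; exact h.choose_spec
        rw [Metric.mem_thickening_iff]
        refine ⟨f c, ⟨c, hc, rfl⟩, ?_⟩
        have : edist y (f c) < ENNReal.ofReal d :=
          lt_of_le_of_lt (EMetric.edist_le_diam_of_mem hyc hfc.1) (hdiam c hc)
        rw [edist_lt_ofReal] at this
        linarith
    choose F hFfin hFbd τ' hτ'le himg using claim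
    refine ⟨F, hFfin, ⟨R0 + ε, by linarith, fun t => ?_⟩, fun t R hR => ?_⟩
    · intro y hy
      rw [Metric.mem_thickening_iff] at hy
      obtain ⟨z, hz, hyz⟩ := hy
      have hzb := hFbd t hz
      rw [Metric.mem_closedBall] at hzb ⊢
      calc dist y 0 ≤ dist y z + dist z 0 := dist_triangle _ _ _
        _ ≤ R0 + ε := by linarith
    · obtain ⟨t2, ht2, habs2⟩ := habs (τ' t) R hR
      refine ⟨t2, le_trans ht2 (hτ'le t), fun σ hσ => ?_⟩
      have hστ : σ ≤ τ' t := le_trans hσ ht2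
      have heq : U t σ '' closedBall 0 R
          = U t (τ' t) '' (U (τ' t) σ '' closedBall 0 R) := by
        rw [Set.image_image]
        exact Set.image_congr (fun x _ => (hU2 hστ (hτ'le t) x).symm)
      rw [heq]
      exact (Set.image_mono (habs2 σ hσ)).trans (himg t)
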